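/- There exists an absolute constant K such that for every n and every pair (B_1, B_2) of binary trees with n leaves, (1/n!)·Σ_{s=0}^{⌊n/2⌋} z_{μ(s)} |A(B_1)_{μ(s)}| |A(B_2)_{μ(s)}| ≤ K, where μ(s) = 2^s 1^{n−2s} and z_{μ(s)} = 2^s s! (n−2s)!. -/

import Mathlib

open scoped Classical

inductive PTree : Type
  | leaf : PTree
  | node : PTree → PTree → PTree
deriving DecidableEq

namespace PTree

def size : PTree → ℕ
  | leaf => 1
  | node l r => size l + size r

def cherries : PTree → ℕ
  | leaf => 0
  | node leaf leaf => 1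
  | node l r => cherries l + cherries r

def height : PTree → ℕ
  | leaf => 0
  | node l r => max (height l) (height r) + 1

def encode : PTree → ℕ
  | leaf => 0
  | node l r => Nat.pair (encode l) (encode r) + 1

def normalize : PTree → PTree
  | leaf => leaf
  | node l r =>
      let l' := normalize l
      let r' := normalize r
      if encode l' ≤ encode r' then node l' r' else node r' l'

def isoFuns : PTree → PTree → List (ℕ → ℕ)
  | leaf, leaf => [fun i => i]
  | node l r, node l' r' =>
      ((isoFuns l l').flatMap fun g => (isoFuns r r').map fun h =>
        fun i => if i < l.size then g i else h (i - l.size) + l'.size)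
      ++
      ((isoFuns l r').flatMap fun g => (isoFuns r l').map fun h =>
        fun i => if i < l.size then g i + l'.size else h (i - l.size))
  | _, _ => []

def planeTrees : ℕ → Finset PTree
  | 0 => ∅
  | 1 => {leaf}
  | n + 2 =>
      (Finset.range (n + 1)).attach.biUnion fun k =>
        ((planeTrees (k.1 + 1)) ×ˢ (planeTrees (n + 1 - k.1))).image
          fun p => node p.1 p.2
  termination_by n => n
  decreasing_by
  · have := Finset.mem_range.mp k.2; omega
  · omega

def binTrees (n : ℕ) : Finset PTree := (planeTrees n).image normalize

/-- Triples (T, v, S): left plane tree, right plane tree, and a matching `v`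
(a permutation of `0, …, n-1`, encoded as the list of its values) matching
leaf `i` of `T` with leaf `v i` of `S`. -/
def Triples (n : ℕ) : Finset (PTree × PTree × List ℕ) :=
  (planeTrees n) ×ˢ ((planeTrees n) ×ˢ (List.range n).permutations.toFinset)

/-- Two triples represent the same tanglegram iff there are isomorphisms of the left
trees and of the right trees compatible with the matchings. -/
def equivTriple (n : ℕ) (t t' : PTree × PTree × List ℕ) : Bool :=
  (isoFuns t.1 t'.1).any fun φ => (isoFuns t.2.1 t'.2.1).any fun ψ =>
    (List.range n).all fun i => t'.2.2.getD (φ i) 0 == ψ (t.2.2.getD i 0)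

/-- The tanglegrams of size `n`: equivalence classes of triples. -/
def tangleClasses (n : ℕ) : Finset (Finset (PTree × PTree × List ℕ)) :=
  (Triples n).image fun t => (Triples n).filter (fun t' => equivTriple n t t' = true)

/-- The number of tanglegrams of size `n`. -/
def numTanglegrams (n : ℕ) : ℕ := (tangleClasses n).card

/-- The probability that a uniformly random tanglegram of size `n` satisfies the
(isomorphism-invariant) property `P` of triples. -/
noncomputable def tangleProb (n : ℕ) (P : PTree × PTree × List ℕ → Prop) : ℝ :=
  ((tangleClasses n).filter fun c => ∃ t ∈ c, P t).card / numTanglegrams n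

/-- The expectation of the statistic `f` of a uniformly random tanglegram of size `n`. -/
noncomputable def tangleExp (n : ℕ) (f : PTree × PTree × List ℕ → ℕ) : ℝ :=
  ∑' k : ℕ, (k : ℝ) * tangleProb n (fun t => f t = k)

end PTree

namespace PTree

/-- The distribution on pairs of binary trees (canonical representatives) induced by
the two halves of a uniformly random tanglegram of size `n`:
probability that the pair of isomorphism classes of the two trees lies in `S`. -/
noncomputable def nuT (n : ℕ) (S : Finset (PTree × PTree)) : ℝ :=
  tangleProb n fun t => (normalize t.1, normalize t.2.1) ∈ S

/-- The distribution on pairs of binary trees induced by two independent uniformly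
random plane binary trees with `n` leaves. -/
noncomputable def nuP (n : ℕ) (S : Finset (PTree × PTree)) : ℝ :=
  (((planeTrees n) ×ˢ (planeTrees n)).filter
      fun p => (normalize p.1, normalize p.2) ∈ S).card / ((planeTrees n).card ^ 2 : ℝ)

/-- The total variation distance between `nuT` and `nuP`. -/
noncomputable def tvDist (n : ℕ) : ℝ :=
  ((binTrees n ×ˢ binTrees n).powerset).sup' (Finset.powerset_nonempty _)
    fun S => |nuT n S - nuP n S|

/-- The number of occurrences of (trees isomorphic to) `B` as a fringe subtree of `T`. -/
def occ (B : PTree) : PTree → ℕ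
  | leaf => if normalize leaf = normalize B then 1 else 0
  | node l r => (if normalize (node l r) = normalize B then 1 else 0) + occ B l + occ B r

/-- The number of generators of the automorphism group of `T`: the number of internal
vertices whose two branches are isomorphic. -/
def gens : PTree → ℕ
  | leaf => 0
  | node l r => (if normalize l = normalize r then 1 else 0) + gens l + gens r

/-- `T` has a root branch isomorphic to `B`. -/
def hasBranch (B : PTree) : PTree → Prop
  | leaf => False
  | node l r => normalize l = normalize B ∨ normalize r = normalize B

/-- The cherries of a plane binary tree whose leaves are numbered from `k` on
(left to right), as pairs of leaf positions. -/
def cherryList : PTree → ℕ → List (ℕ × ℕ)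
  | leaf, _ => []
  | node leaf leaf, k => [(k, k + 1)]
  | node l r, k => cherryList l k ++ cherryList r (k + l.size)

/-- The number of matched cherries: cherries of `T` whose two leaves are matched by `L`
to the two leaves of a cherry of `S`. -/
def matchedCherries (T S : PTree) (L : List ℕ) : ℕ :=
  (cherryList T 0).countP fun p =>
    (cherryList S 0).any fun q =>
      (L.getD p.1 0 == q.1 && L.getD p.2 0 == q.2) ||
      (L.getD p.1 0 == q.2 && L.getD p.2 0 == q.1)

/-- The number of automorphisms of the tanglegram represented by the triple `(T, L, S)`:
pairs of automorphisms of the two trees compatible with the matching `L`. -/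
def tangleAutCount (T S : PTree) (L : List ℕ) : ℕ :=
  ((isoFuns T T).map fun a =>
    (isoFuns S S).countP fun b =>
      (List.range T.size).all fun i => L.getD (a i) 0 == b (L.getD i 0)).sum

/-- The number of automorphisms of `T` whose cycle type is `μ(s) = 2^s 1^(n-2s)`,
i.e. involutions of the leaves moving exactly `2 s` leaves. -/
def autMuCount (T : PTree) (s : ℕ) : ℕ :=
  (isoFuns T T).countP fun f =>
    ((List.range T.size).all fun i => f (f i) == i) &&
    ((List.range T.size).countP fun i => !(f i == i)) == 2 * s

end PTree

namespace PTree

lemma size_pos : ∀ T : PTree, 0 < T.size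
  | leaf => Nat.one_pos
  | node l r => by
      have h := size_pos l
      simp only [size]; omega

lemma isoFuns_lt : ∀ (T S : PTree), ∀ f ∈ isoFuns T S, ∀ i, i < T.size → f i < S.size
  | leaf, leaf => by
      intro f hf i hi
      simp only [isoFuns, List.mem_singleton] at hf
      subst hf
      simpa [size] using hi
  | leaf, node _ _ => by intro f hf; simp [isoFuns] at hf
  | node _ _, leaf => by intro f hf; simp [isoFuns] at hf
  | node l r, node l' r' => by
      intro f hf i hi
      have hl' := size_pos l'
      have hr' := size_pos r'
      simp only [isoFuns, List.mem_append, List.mem_flatMap, List.mem_map] at hf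
      simp only [size] at hi ⊢
      rcases hf with ⟨g, hg, h, hh, rfl⟩ | ⟨g, hg, h, hh, rfl⟩
      · by_cases hc : i < l.size
        · have := isoFuns_lt l l' g hg i hc
          simp only [if_pos hc]; omega
        · have hir : i - l.size < r.size := by omega
          have := isoFuns_lt r r' h hh _ hir
          simp only [if_neg hc]; omega
      · by_cases hc : i < l.size
        · have := isoFuns_lt l r' g hg i hc
          simp only [if_pos hc]; omega
        · have hir : i - l.size < r.size := by omega
          have := isoFuns_lt r l' h hh _ hir
          simp only [if_neg hc]; omega

lemma length_flatMap_map {α β γ : Type*} (L1 : List α) (L2 : List β) (F : α → β → γ) :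
    (L1.flatMap fun g => L2.map (F g)).length = L1.length * L2.length := by
  rw [List.length_flatMap]
  simp only [Function.comp_def, List.length_map]
  rw [List.map_const', List.sum_replicate, smul_eq_mul]

lemma isoFuns_length : ∀ T S : PTree, (isoFuns T S).length ≤ 2 ^ (T.size - 1)
  | leaf, leaf => by simp [isoFuns, size]
  | leaf, node _ _ => by simp [isoFuns]
  | node _ _, leaf => by simp [isoFuns]
  | node l r, node l' r' => by
      have h1 := isoFuns_length l l'
      have h2 := isoFuns_length r r'
      have h3 := isoFuns_length l r'
      have h4 := isoFuns_length r l'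
      have hl := size_pos l
      have hr := size_pos r
      simp only [isoFuns, List.length_append, length_flatMap_map, size]
      have e : l.size + r.size - 1 = l.size - 1 + (r.size - 1) + 1 := by omega
      calc (isoFuns l l').length * (isoFuns r r').length +
            (isoFuns l r').length * (isoFuns r l').length
          ≤ 2 ^ (l.size - 1) * 2 ^ (r.size - 1) + 2 ^ (l.size - 1) * 2 ^ (r.size - 1) :=
            Nat.add_le_add (Nat.mul_le_mul h1 h2) (Nat.mul_le_mul h3 h4)
        _ = 2 ^ (l.size - 1 + (r.size - 1) + 1) := by ring
        _ = 2 ^ (l.size + r.size - 1) := by rw [e]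

def involB (n : ℕ) (f : ℕ → ℕ) : Bool := (List.range n).all fun i => f (f i) == i

def movedCt (n : ℕ) (f : ℕ → ℕ) : ℕ := (List.range n).countP fun i => !(f i == i)

noncomputable def phi (n : ℕ) (y : ℝ) (f : ℕ → ℕ) : ℝ :=
  if involB n f then y ^ movedCt n f else 0

lemma phi_nonneg {n : ℕ} {y : ℝ} (hy : 0 ≤ y) (f : ℕ → ℕ) : 0 ≤ phi n y f := by
  unfold phi
  split
  · exact pow_nonneg hy _
  · exact le_refl 0

lemma movedCt_fA (p q : ℕ) (g h : ℕ → ℕ) :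
    movedCt (p + q) (fun i => if i < p then g i else h (i - p) + p) =
      movedCt p g + movedCt q h := by
  unfold movedCt
  rw [List.range_add, List.countP_append, List.countP_map]
  congr 1
  · refine List.countP_congr ?_
    intro i hi
    have hi' : i < p := List.mem_range.mp hi
    simp [hi']
  · refine List.countP_congr ?_
    intro j hj
    have hj' : j < q := List.mem_range.mp hj
    have h1 : ¬ (p + j < p) := by omega
    simp only [Function.comp_apply, if_neg h1, Nat.add_sub_cancel_left,
      Bool.not_eq_true', beq_eq_false_iff_ne, ne_eq]
    constructor
    · intro hne he; exact hne (by omega)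
    · intro hne he; exact hne (by omega)

lemma involB_fA {p q : ℕ} {g h : ℕ → ℕ} (hg : ∀ i, i < p → g i < p)
    (hh : ∀ i, i < q → h i < q)
    (H : involB (p + q) (fun i => if i < p then g i else h (i - p) + p) = true) :
    involB p g = true ∧ involB q h = true := by
  unfold involB at H ⊢
  rw [List.all_eq_true] at H
  constructor
  · rw [List.all_eq_true]
    intro i hi
    have hi' : i < p := List.mem_range.mp hi
    have H1 := H i (List.mem_range.mpr (by omega))
    have hgi := hg i hi'
    simp only [if_pos hi', if_pos hgi] at H1
    exact H1
  · rw [List.all_eq_true]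
    intro j hj
    have hj' : j < q := List.mem_range.mp hj
    have H1 := H (p + j) (List.mem_range.mpr (by omega))
    have h1 : ¬ (p + j < p) := by omega
    simp only [if_neg h1, Nat.add_sub_cancel_left] at H1
    have h2 : ¬ (h j + p < p) := by omega
    simp only [if_neg h2, Nat.add_sub_cancel] at H1
    simp only [beq_iff_eq] at H1 ⊢
    omega

lemma movedCt_fB {p q : ℕ} {g h : ℕ → ℕ} (hh : ∀ i, i < q → h i < p) :
    movedCt (p + q) (fun i => if i < p then g i + p else h (i - p)) = p + q := by
  unfold movedCt
  have := (List.countP_eq_length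
    (p := fun i => !((if i < p then g i + p else h (i - p)) == i))
    (l := List.range (p + q))).mpr ?_
  · rw [this, List.length_range]
  · intro i hi
    have hi' : i < p + q := List.mem_range.mp hi
    by_cases hc : i < p
    · have : g i + p ≠ i := by omega
      simp [hc, this]
    · have hlt : h (i - p) < p := hh _ (by omega)
      have : h (i - p) ≠ i := by omega
      simp [hc, this]

noncomputable def Gsum (T : PTree) (y : ℝ) : ℝ := ((isoFuns T T).map (phi T.size y)).sum

lemma sum_map_le_length_mul {α : Type*} (L : List α) (φ : α → ℝ) (c : ℝ)
    (h : ∀ a ∈ L, φ a ≤ c) : (L.map φ).sum ≤ L.length * c := by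
  calc (L.map φ).sum ≤ (L.map fun _ => c).sum := List.sum_le_sum h
    _ = L.length * c := by rw [List.map_const', List.sum_replicate, nsmul_eq_mul]

lemma key_ineq (y : ℝ) (hy : 0 ≤ y) (a b : ℕ) :
    (1 + y ^ 2) ^ a * (1 + y ^ 2) ^ b + 2 ^ a * 2 ^ b * y ^ (a + b + 2)
      ≤ (1 + y ^ 2) ^ (a + b + 1) := by
  have h2y : 2 * y ≤ 1 + y ^ 2 := by nlinarith [sq_nonneg (1 - y)]
  have h2 : (2 * y) ^ (a + b) ≤ (1 + y ^ 2) ^ (a + b) :=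
    pow_le_pow_left₀ (by positivity) h2y _
  have e1 : (2:ℝ) ^ a * 2 ^ b * y ^ (a + b + 2) = (2 * y) ^ (a + b) * y ^ 2 := by
    rw [mul_pow, ← pow_add]; ring
  calc (1 + y ^ 2) ^ a * (1 + y ^ 2) ^ b + 2 ^ a * 2 ^ b * y ^ (a + b + 2)
      = (1 + y ^ 2) ^ (a + b) + (2 * y) ^ (a + b) * y ^ 2 := by rw [← pow_add, e1]
    _ ≤ (1 + y ^ 2) ^ (a + b) + (1 + y ^ 2) ^ (a + b) * y ^ 2 :=
        add_le_add le_rfl (mul_le_mul_of_nonneg_right h2 (sq_nonneg y))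
    _ = (1 + y ^ 2) ^ (a + b + 1) := by ring

lemma Gsum_le : ∀ (T : PTree) (y : ℝ), 0 ≤ y → Gsum T y ≤ (1 + y ^ 2) ^ (T.size - 1)
  | leaf, y, hy => by
      have h1 : involB 1 (fun i => i) = true := by decide
      simp [Gsum, isoFuns, phi, size, h1, movedCt]
  | node l r, y, hy => by
      have IHl := Gsum_le l y hy
      have IHr := Gsum_le r y hy
      have hl := size_pos l
      have hr := size_pos r
      have hcpos : (0:ℝ) ≤ 1 + y ^ 2 := by positivity
      have hGA : (((isoFuns l l).flatMap fun g => (isoFuns r r).map fun h =>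
            fun i => if i < l.size then g i else h (i - l.size) + l.size).map
              (phi (l.size + r.size) y)).sum
          ≤ (1 + y ^ 2) ^ (l.size - 1) * (1 + y ^ 2) ^ (r.size - 1) := by
        rw [List.map_flatMap, List.flatMap_def, List.sum_flatten, List.map_map]
        have inner : ∀ g ∈ isoFuns l l,
            ((List.map (phi (l.size + r.size) y) ∘ fun g => (isoFuns r r).map fun h =>
              fun i => if i < l.size then g i else h (i - l.size) + l.size) g).sum
            ≤ phi l.size y g * (1 + y ^ 2) ^ (r.size - 1) := by
          intro g hg
          simp only [Function.comp_apply, List.map_map]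
          have point : ∀ h ∈ isoFuns r r,
              ((phi (l.size + r.size) y) ∘ fun h =>
                  fun i => if i < l.size then g i else h (i - l.size) + l.size) h
              ≤ phi l.size y g * phi r.size y h := by
            intro h hh
            simp only [Function.comp_apply]
            unfold phi
            by_cases H : involB (l.size + r.size)
                (fun i => if i < l.size then g i else h (i - l.size) + l.size) = true
            · obtain ⟨H1, H2⟩ := involB_fA (isoFuns_lt l l g hg) (isoFuns_lt r r h hh) H
              rw [if_pos H, if_pos H1, if_pos H2, movedCt_fA, pow_add]
            · rw [if_neg H]
              have := phi_nonneg (n := l.size) hy g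
              have := phi_nonneg (n := r.size) hy h
              unfold phi at *
              positivity
          calc ((isoFuns r r).map ((phi (l.size + r.size) y) ∘ fun h =>
                  fun i => if i < l.size then g i else h (i - l.size) + l.size)).sum
              ≤ ((isoFuns r r).map fun h => phi l.size y g * phi r.size y h).sum :=
                List.sum_le_sum point
            _ = phi l.size y g * ((isoFuns r r).map (phi r.size y)).sum :=
                List.sum_map_mul_left _ _ _
            _ ≤ phi l.size y g * (1 + y ^ 2) ^ (r.size - 1) :=
                mul_le_mul_of_nonneg_left IHr (phi_nonneg hy g)
        calc ((isoFuns l l).map (List.sum ∘ (List.map (phi (l.size + r.size) y) ∘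
                fun g => (isoFuns r r).map fun h =>
                  fun i => if i < l.size then g i else h (i - l.size) + l.size))).sum
            ≤ ((isoFuns l l).map fun g => phi l.size y g * (1 + y ^ 2) ^ (r.size - 1)).sum :=
              List.sum_le_sum (fun g hg => inner g hg)
          _ = ((isoFuns l l).map (phi l.size y)).sum * (1 + y ^ 2) ^ (r.size - 1) :=
              List.sum_map_mul_right _ _ _
          _ ≤ (1 + y ^ 2) ^ (l.size - 1) * (1 + y ^ 2) ^ (r.size - 1) :=
              mul_le_mul_of_nonneg_right IHl (by positivity)
      have hGB : (((isoFuns l r).flatMap fun g => (isoFuns r l).map fun h =>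
            fun i => if i < l.size then g i + l.size else h (i - l.size)).map
              (phi (l.size + r.size) y)).sum
          ≤ 2 ^ (l.size - 1) * 2 ^ (r.size - 1) * y ^ (l.size + r.size) := by
        have hpt : ∀ f ∈ ((isoFuns l r).flatMap fun g => (isoFuns r l).map fun h =>
            fun i => if i < l.size then g i + l.size else h (i - l.size)),
            phi (l.size + r.size) y f ≤ y ^ (l.size + r.size) := by
          intro f hf
          simp only [List.mem_flatMap, List.mem_map] at hf
          obtain ⟨g, hg, h, hh, rfl⟩ := hf
          unfold phi
          split
          · rw [movedCt_fB (isoFuns_lt r l h hh)]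
          · positivity
        calc (((isoFuns l r).flatMap fun g => (isoFuns r l).map fun h =>
                fun i => if i < l.size then g i + l.size else h (i - l.size)).map
                  (phi (l.size + r.size) y)).sum
            ≤ (((isoFuns l r).flatMap fun g => (isoFuns r l).map fun h =>
                fun i => if i < l.size then g i + l.size else h (i - l.size)).length : ℝ)
                * y ^ (l.size + r.size) := sum_map_le_length_mul _ _ _ hpt
          _ ≤ 2 ^ (l.size - 1) * 2 ^ (r.size - 1) * y ^ (l.size + r.size) := by
              have hlen := length_flatMap_map (isoFuns l r) (isoFuns r l)
                (fun g h => fun i => if i < l.size then g i + l.size else h (i - l.size))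
              have hle : ((isoFuns l r).flatMap fun g => (isoFuns r l).map fun h =>
                  fun i => if i < l.size then g i + l.size else h (i - l.size)).length
                  ≤ 2 ^ (l.size - 1) * 2 ^ (r.size - 1) := by
                rw [hlen]
                exact Nat.mul_le_mul (isoFuns_length l r) (isoFuns_length r l)
              have := mul_le_mul_of_nonneg_right (show
                  (((isoFuns l r).flatMap fun g => (isoFuns r l).map fun h =>
                    fun i => if i < l.size then g i + l.size else h (i - l.size)).length : ℝ)
                  ≤ 2 ^ (l.size - 1) * 2 ^ (r.size - 1) by exact_mod_cast hle)
                (pow_nonneg hy (l.size + r.size))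
              exact this
      obtain ⟨a, ha⟩ : ∃ a, l.size = a + 1 := ⟨l.size - 1, by omega⟩
      obtain ⟨b, hb⟩ : ∃ b, r.size = b + 1 := ⟨r.size - 1, by omega⟩
      have hsz : (node l r).size = l.size + r.size := rfl
      unfold Gsum
      rw [hsz]
      simp only [isoFuns, List.map_append, List.sum_append]
      refine le_trans (add_le_add hGA hGB) ?_
      rw [ha, hb]
      have e1 : a + 1 + (b + 1) = a + b + 2 := by omega
      have e2 : a + 1 - 1 = a := by omega
      have e3 : b + 1 - 1 = b := by omega
      have e4 : a + b + 2 - 1 = a + b + 1 := by omega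
      rw [e1, e2, e3, e4]
      exact key_ineq y hy a b

lemma countP_mul_le_sum {α : Type*} : ∀ (L : List α) (pr : α → Bool) (φ : α → ℝ) (w : ℝ),
    0 ≤ w → (∀ a ∈ L, 0 ≤ φ a) → (∀ a ∈ L, pr a = true → w ≤ φ a) →
    (L.countP pr : ℝ) * w ≤ (L.map φ).sum
  | [], _, _, _, _, _, _ => by simp
  | a :: L, pr, φ, w, hw, h0, h1 => by
      have IH := countP_mul_le_sum L pr φ w hw
        (fun x hx => h0 x (List.mem_cons_of_mem _ hx))
        (fun x hx => h1 x (List.mem_cons_of_mem _ hx))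
      rw [List.countP_cons]
      simp only [List.map_cons, List.sum_cons]
      by_cases hpa : pr a = true
      · rw [if_pos hpa]
        have hwa := h1 a List.mem_cons_self hpa
        push_cast
        linarith
      · rw [if_neg hpa]
        have h0a := h0 a List.mem_cons_self
        push_cast
        linarith

lemma autMuCount_mul_le (T : PTree) (s : ℕ) (x : ℝ) (hx : 0 ≤ x) :
    (autMuCount T s : ℝ) * x ^ s ≤ (1 + x) ^ (T.size - 1) := by
  have hy : 0 ≤ Real.sqrt x := Real.sqrt_nonneg x
  have hy2 : Real.sqrt x ^ 2 = x := Real.sq_sqrt hx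
  have hG := Gsum_le T (Real.sqrt x) hy
  rw [hy2] at hG
  refine le_trans ?_ hG
  unfold Gsum autMuCount
  refine countP_mul_le_sum _ _ _ _ (by positivity) (fun a _ => phi_nonneg hy a) ?_
  intro f _ hf
  rw [Bool.and_eq_true] at hf
  obtain ⟨h1, h2⟩ := hf
  have h1' : involB T.size f = true := h1
  have hm : movedCt T.size f = 2 * s := by
    simpa [movedCt] using h2
  unfold phi
  rw [if_pos h1', hm, pow_mul, hy2]

lemma desc_ineq (n k : ℕ) (hk : k ≤ n) :
    (n - k).factorial * k.factorial * n ^ k ≤ n.factorial * k ^ k := by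
  have h1 : (n - k).factorial * n.descFactorial k = n.factorial :=
    Nat.factorial_mul_descFactorial hk
  have hfac : k.factorial = ∏ i ∈ Finset.range k, (k - i) := by
    rw [← Finset.prod_range_add_one_eq_factorial k,
      ← Finset.prod_range_reflect (fun j => j + 1) k]
    exact Finset.prod_congr rfl (fun i hi => by
      have := Finset.mem_range.mp hi; omega)
  have h2 : k.factorial * n ^ k ≤ n.descFactorial k * k ^ k := by
    have hn : n ^ k = ∏ _i ∈ Finset.range k, n := by simp
    have hk2 : k ^ k = ∏ _i ∈ Finset.range k, k := by simp
    rw [Nat.descFactorial_eq_prod_range, hfac, hn, hk2,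
      ← Finset.prod_mul_distrib, ← Finset.prod_mul_distrib]
    refine Finset.prod_le_prod' ?_
    intro i hi
    have hik := Finset.mem_range.mp hi
    rw [Nat.sub_mul, Nat.sub_mul]
    have hmul : i * k ≤ i * n := Nat.mul_le_mul_left i hk
    have hcomm : k * n = n * k := Nat.mul_comm _ _
    omega
  calc (n - k).factorial * k.factorial * n ^ k
      = (n - k).factorial * (k.factorial * n ^ k) := by ring
    _ ≤ (n - k).factorial * (n.descFactorial k * k ^ k) := by gcongr
    _ = (n - k).factorial * n.descFactorial k * k ^ k := by ring
    _ = n.factorial * k ^ k := by rw [h1]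

lemma nat_term_ineq (n s : ℕ) (h : 2 * s ≤ n) :
    2 ^ s * (s.factorial * s.factorial) * (n - 2 * s).factorial * (2 * n) ^ (2 * s)
      ≤ 32 ^ s * n.factorial * s ^ (2 * s) := by
  have h1 : s.factorial * s.factorial ≤ (2 * s).factorial := by
    have hd := Nat.factorial_mul_factorial_dvd_factorial_add s s
    have h2 := Nat.le_of_dvd (Nat.factorial_pos _) hd
    simpa [two_mul] using h2
  have h2 := desc_ineq n (2 * s) h
  have e32 : (32 : ℕ) ^ s = 2 ^ s * 2 ^ (2 * s) * 2 ^ (2 * s) := by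
    rw [show (32:ℕ) = 2 ^ 5 by norm_num, ← pow_mul, ← pow_add, ← pow_add]
    congr 1
    omega
  calc 2 ^ s * (s.factorial * s.factorial) * (n - 2 * s).factorial * (2 * n) ^ (2 * s)
      = 2 ^ s * 2 ^ (2 * s) * ((s.factorial * s.factorial) *
          ((n - 2 * s).factorial * n ^ (2 * s))) := by rw [mul_pow]; ring
    _ ≤ 2 ^ s * 2 ^ (2 * s) * ((2 * s).factorial *
          ((n - 2 * s).factorial * n ^ (2 * s))) := by gcongr
    _ = 2 ^ s * 2 ^ (2 * s) * ((n - 2 * s).factorial * (2 * s).factorial * n ^ (2 * s)) := by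
        ring
    _ ≤ 2 ^ s * 2 ^ (2 * s) * (n.factorial * (2 * s) ^ (2 * s)) := by gcongr
    _ = 32 ^ s * n.factorial * s ^ (2 * s) := by
        rw [e32, mul_pow]; ring

end PTree

open PTree in
/-- Lemma 3, part (1): there is an absolute constant `K` bounding
`(1/n!) ∑_s z_{μ(s)} |A(B₁)_{μ(s)}| |A(B₂)_{μ(s)}|` for all pairs of binary trees
with `n` leaves, where `z_{μ(s)} = 2^s s! (n-2s)!`. -/
theorem sum_zmu_autMuCount_le :
    ∃ K : ℝ, ∀ n : ℕ, ∀ B₁ B₂ : PTree, B₁.size = n → B₂.size = n →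
      (∑ s ∈ Finset.range (n / 2 + 1),
          (2 : ℝ) ^ s * (Nat.factorial s) * (Nat.factorial (n - 2 * s)) *
            (autMuCount B₁ s) * (autMuCount B₂ s)) / (Nat.factorial n : ℝ) ≤ K := by
  refine ⟨Real.exp (32 * Real.exp 2), ?_⟩
  intro n B₁ B₂ h1 h2
  have hfac : (0:ℝ) < (Nat.factorial n : ℝ) := by exact_mod_cast Nat.factorial_pos n
  rw [div_le_iff₀ hfac]
  have hn : 0 < n := h1 ▸ size_pos B₁
  have hterm : ∀ s ∈ Finset.range (n / 2 + 1),
      (2 : ℝ) ^ s * (Nat.factorial s) * (Nat.factorial (n - 2 * s)) *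
          (autMuCount B₁ s) * (autMuCount B₂ s)
        ≤ (32 * Real.exp 2) ^ s / (Nat.factorial s) * (Nat.factorial n) := by
    intro s hs
    have hs2 : 2 * s ≤ n := by
      have := Finset.mem_range.mp hs
      omega
    set x : ℝ := (s : ℝ) / ((n : ℝ) + 2 * s) with hxdef
    have hnR : (0:ℝ) < (n : ℝ) := by exact_mod_cast hn
    have hden : (0:ℝ) < (n : ℝ) + 2 * s := by positivity
    have hx0 : 0 ≤ x := by positivity
    have hA := autMuCount_mul_le B₁ s x hx0
    have hB := autMuCount_mul_le B₂ s x hx0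
    rw [h1] at hA
    rw [h2] at hB
    have h0s : (0:ℝ) ≤ (s:ℝ) := Nat.cast_nonneg s
    have hxs : x * (n:ℝ) ≤ (s:ℝ) := by
      rw [hxdef, div_mul_eq_mul_div, div_le_iff₀ hden]
      nlinarith
    have hexp : (1 + x) ^ (n - 1) ≤ Real.exp s := by
      have h1x : 1 + x ≤ Real.exp x := by
        have := Real.add_one_le_exp x; linarith
      calc (1 + x) ^ (n - 1) ≤ (Real.exp x) ^ (n - 1) :=
            pow_le_pow_left₀ (by positivity) h1x _
        _ = Real.exp (((n - 1 : ℕ) : ℝ) * x) := (Real.exp_nat_mul x (n-1)).symm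
        _ ≤ Real.exp s := by
            apply Real.exp_le_exp.mpr
            have hle : ((n - 1 : ℕ) : ℝ) ≤ (n : ℝ) := by exact_mod_cast Nat.sub_le n 1
            calc ((n-1:ℕ):ℝ) * x ≤ (n:ℝ) * x := mul_le_mul_of_nonneg_right hle hx0
              _ = x * n := mul_comm _ _
              _ ≤ s := hxs
    have hab : (autMuCount B₁ s : ℝ) * (autMuCount B₂ s) * x ^ (2*s)
        ≤ Real.exp 2 ^ s := by
      have hprod := mul_le_mul hA hB (by positivity) (by positivity)
      calc (autMuCount B₁ s : ℝ) * (autMuCount B₂ s) * x ^ (2*s)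
          = ((autMuCount B₁ s : ℝ) * x ^ s) * ((autMuCount B₂ s : ℝ) * x ^ s) := by
            rw [two_mul, pow_add]; ring
        _ ≤ (1 + x) ^ (n-1) * (1 + x) ^ (n-1) := hprod
        _ ≤ Real.exp s * Real.exp s :=
            mul_le_mul hexp hexp (by positivity) (Real.exp_nonneg _)
        _ = Real.exp 2 ^ s := by
            rw [← Real.exp_add, ← Real.exp_nat_mul]
            congr 1
            push_cast
            ring
    have hxg : (s:ℝ) / (2 * n) ≤ x := by
      rw [hxdef, div_le_div_iff₀ (by positivity) hden]
      have hc2 : ((2*s : ℕ):ℝ) ≤ (n:ℝ) := by exact_mod_cast hs2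
      push_cast at hc2
      nlinarith
    have hab3 : (autMuCount B₁ s : ℝ) * (autMuCount B₂ s) * (s:ℝ) ^ (2*s)
        ≤ Real.exp 2 ^ s * (2 * (n:ℝ)) ^ (2*s) := by
      have hxmono : ((s:ℝ)/(2*n)) ^ (2*s) ≤ x ^ (2*s) :=
        pow_le_pow_left₀ (by positivity) hxg _
      have hchain : (autMuCount B₁ s : ℝ) * (autMuCount B₂ s) * ((s:ℝ)/(2*n)) ^ (2*s)
          ≤ Real.exp 2 ^ s := by
        refine le_trans ?_ hab
        have hnn : (0:ℝ) ≤ (autMuCount B₁ s : ℝ) * (autMuCount B₂ s) := by positivity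
        exact mul_le_mul_of_nonneg_left hxmono hnn
      have h2n : (0:ℝ) < (2 * (n:ℝ)) ^ (2*s) := by positivity
      rw [div_pow] at hchain
      calc (autMuCount B₁ s : ℝ) * (autMuCount B₂ s) * (s:ℝ) ^ (2*s)
          = (autMuCount B₁ s : ℝ) * (autMuCount B₂ s) *
              ((s:ℝ) ^ (2*s) / (2 * (n:ℝ)) ^ (2*s)) * (2 * (n:ℝ)) ^ (2*s) := by
            field_simp
        _ ≤ Real.exp 2 ^ s * (2 * (n:ℝ)) ^ (2*s) :=
            mul_le_mul_of_nonneg_right hchain h2n.le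
    have hNI : ((2:ℝ) ^ s * ((Nat.factorial s : ℝ) * (Nat.factorial s)) *
        (Nat.factorial (n - 2*s)) * (2 * (n:ℝ)) ^ (2*s))
        ≤ 32 ^ s * (Nat.factorial n) * (s:ℝ) ^ (2*s) := by
      have := nat_term_ineq n s hs2
      exact_mod_cast this
    have hsfac : (0:ℝ) < (Nat.factorial s : ℝ) := by exact_mod_cast Nat.factorial_pos s
    have hspow : (0:ℝ) < (s:ℝ) ^ (2*s) := by
      rcases Nat.eq_zero_or_pos s with hz | hz
      · subst hz; simp
      · have : (0:ℝ) < (s:ℝ) := by exact_mod_cast hz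
        positivity
    rw [div_mul_eq_mul_div, le_div_iff₀ hsfac]
    refine le_of_mul_le_mul_right ?_ hspow
    calc (2:ℝ) ^ s * (Nat.factorial s) * (Nat.factorial (n - 2*s)) *
            (autMuCount B₁ s) * (autMuCount B₂ s) * (Nat.factorial s) * (s:ℝ) ^ (2*s)
        = ((2:ℝ) ^ s * ((Nat.factorial s : ℝ) * (Nat.factorial s)) *
            (Nat.factorial (n - 2*s))) *
            ((autMuCount B₁ s : ℝ) * (autMuCount B₂ s) * (s:ℝ) ^ (2*s)) := by ring
      _ ≤ ((2:ℝ) ^ s * ((Nat.factorial s : ℝ) * (Nat.factorial s)) *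
            (Nat.factorial (n - 2*s))) *
            (Real.exp 2 ^ s * (2 * (n:ℝ)) ^ (2*s)) :=
          mul_le_mul_of_nonneg_left hab3 (by positivity)
      _ = Real.exp 2 ^ s * ((2:ℝ) ^ s * ((Nat.factorial s : ℝ) * (Nat.factorial s)) *
            (Nat.factorial (n - 2*s)) * (2 * (n:ℝ)) ^ (2*s)) := by ring
      _ ≤ Real.exp 2 ^ s * (32 ^ s * (Nat.factorial n) * (s:ℝ) ^ (2*s)) :=
          mul_le_mul_of_nonneg_left hNI (by positivity)
      _ = (32 * Real.exp 2) ^ s * (Nat.factorial n) * (s:ℝ) ^ (2*s) := by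
          rw [mul_pow]; ring
  calc (∑ s ∈ Finset.range (n / 2 + 1),
          (2 : ℝ) ^ s * (Nat.factorial s) * (Nat.factorial (n - 2 * s)) *
            (autMuCount B₁ s) * (autMuCount B₂ s))
      ≤ ∑ s ∈ Finset.range (n / 2 + 1),
          (32 * Real.exp 2) ^ s / (Nat.factorial s) * (Nat.factorial n) :=
        Finset.sum_le_sum hterm
    _ = (∑ s ∈ Finset.range (n / 2 + 1),
          (32 * Real.exp 2) ^ s / (Nat.factorial s)) * (Nat.factorial n) := by
        rw [Finset.sum_mul]
    _ ≤ Real.exp (32 * Real.exp 2) * (Nat.factorial n) := by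
        refine mul_le_mul_of_nonneg_right ?_ hfac.le
        exact Real.sum_le_exp_of_nonneg (by positivity) _
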